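/- Let f be a non-negative convex function on the triangle Δ = {(x,y) : x ≥ 0, y ≥ 0, x/a + y/b ≤ 1} such that the functions x ↦ f(x,0) and y ↦ f(0,y) are non-increasing. Then there exists a constant C, independent of a and b, such that (∫_Δ f² dμ)^{1/2} ≤ C (∫₀^a f(x,0) dx + ∫₀^b f(0,y) dy + √(ab) · max{f(a,0), f(0,b)}). -/

import Mathlib

open MeasureTheory Set

/-- For a non-negative continuous convex function `f` on the triangle
with vertices `(0,0), (a,0), (0,b)` whose restrictions to the two legs are
non-increasing, the `L²` norm of `f` on the triangle is bounded by a constant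
(independent of `a`, `b`) times the sum of the boundary integrals on the legs
plus `√(ab) · max (f(a,0)) (f(0,b))`. -/
theorem stmt_1 :
    ∃ C : ℝ, 0 < C ∧ ∀ (a b : ℝ), 0 < a → 0 < b →
      ∀ f : ℝ × ℝ → ℝ,
        ContinuousOn f {p : ℝ × ℝ | 0 ≤ p.1 ∧ 0 ≤ p.2 ∧ p.1 / a + p.2 / b ≤ 1} →
        ConvexOn ℝ {p : ℝ × ℝ | 0 ≤ p.1 ∧ 0 ≤ p.2 ∧ p.1 / a + p.2 / b ≤ 1} f →
        (∀ p ∈ {p : ℝ × ℝ | 0 ≤ p.1 ∧ 0 ≤ p.2 ∧ p.1 / a + p.2 / b ≤ 1}, 0 ≤ f p) →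
        AntitoneOn (fun x => f (x, 0)) (Icc 0 a) →
        AntitoneOn (fun y => f (0, y)) (Icc 0 b) →
        Real.sqrt (∫ p in {p : ℝ × ℝ | 0 ≤ p.1 ∧ 0 ≤ p.2 ∧ p.1 / a + p.2 / b ≤ 1},
            (f p) ^ 2) ≤
          C * ((∫ x in Icc (0:ℝ) a, f (x, 0)) + (∫ y in Icc (0:ℝ) b, f (0, y)) +
               Real.sqrt (a * b) * max (f (a, 0)) (f (0, b))) := by
  refine ⟨2, by norm_num, ?_⟩
  intro a b ha hb f hfc hfx hf0 _hgx _hgy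
  set S : Set (ℝ × ℝ) := {p : ℝ × ℝ | 0 ≤ p.1 ∧ 0 ≤ p.2 ∧ p.1 / a + p.2 / b ≤ 1} with hSdef
  set M : ℝ := max (f (a, 0)) (f (0, b)) with hMdef
  -- basic membership facts
  have hxmem : ∀ x : ℝ, 0 ≤ x → x ≤ a → ((x, 0) : ℝ × ℝ) ∈ S := by
    intro x hx hxa
    refine ⟨hx, le_refl 0, ?_⟩
    simp only
    rw [zero_div, add_zero]
    exact div_le_one_of_le₀ hxa ha.le
  have hymem : ∀ y : ℝ, 0 ≤ y → y ≤ b → ((0, y) : ℝ × ℝ) ∈ S := by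
    intro y hy hyb
    refine ⟨le_refl 0, hy, ?_⟩
    simp only
    rw [zero_div, zero_add]
    exact div_le_one_of_le₀ hyb hb.le
  have hamem : ((a, 0) : ℝ × ℝ) ∈ S := hxmem a ha.le le_rfl
  have hbmem : ((0, b) : ℝ × ℝ) ∈ S := hymem b hb.le le_rfl
  -- points on the hypotenuse are bounded by M
  have hhyp : ∀ q : ℝ × ℝ, q ∈ segment ℝ ((a, 0) : ℝ × ℝ) ((0, b) : ℝ × ℝ) → f q ≤ M :=
    fun q hq => hfx.le_on_segment hamem hbmem hq
  -- membership bounds for points of S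
  have hSbound : ∀ p ∈ S, p.1 ≤ a ∧ p.2 ≤ b := by
    rintro ⟨u, v⟩ ⟨hu, hv, hs⟩
    constructor
    · have h1 : u / a ≤ 1 := by nlinarith [div_nonneg hv hb.le]
      calc u = (u / a) * a := by field_simp
        _ ≤ 1 * a := by nlinarith
        _ = a := one_mul a
    · have h1 : v / b ≤ 1 := by nlinarith [div_nonneg hu ha.le]
      calc v = (v / b) * b := by field_simp
        _ ≤ 1 * b := by nlinarith
        _ = b := one_mul b
  -- Key pointwise bound 1 : f p ≤ max (f (p.1, 0)) M
  have key1 : ∀ p ∈ S, f p ≤ max (f (p.1, 0)) M := by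
    rintro ⟨u, v⟩ hp
    obtain ⟨hu, hv, hs⟩ := hp
    simp only at hu hv hs ⊢
    rcases eq_or_lt_of_le hv with hv0 | hv0
    · rw [← hv0]; exact le_max_left _ _
    · -- v > 0 ; set w = b * (1 - u/a)
      set w : ℝ := b * (1 - u / a) with hwdef
      have hvw : v ≤ w := by
        have h2 : v / b ≤ 1 - u / a := by linarith
        calc v = b * (v / b) := by field_simp
          _ ≤ b * (1 - u / a) := by nlinarith
      have hw0 : 0 < w := lt_of_lt_of_le hv0 hvw
      have hqseg : ((u, w) : ℝ × ℝ) ∈ segment ℝ ((a, 0) : ℝ × ℝ) ((0, b) : ℝ × ℝ) := by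
        refine ⟨u / a, 1 - u / a, div_nonneg hu ha.le, ?_, by ring, ?_⟩
        · have : v / b ≤ 1 - u / a := by linarith
          have := div_nonneg hv hb.le
          linarith
        · show (u / a * a, u / a * 0) + ((1 - u / a) * 0, (1 - u / a) * b) = (u, w)
          rw [Prod.mk_add_mk, Prod.mk.injEq]
          constructor
          · field_simp; ring
          · rw [hwdef]; ring
      have hqS : ((u, w) : ℝ × ℝ) ∈ S := by
        refine ⟨hu, hw0.le, ?_⟩
        simp only
        have hwb : w / b = 1 - u / a := by rw [hwdef]; field_simp
        rw [hwb]; linarith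
      have hpseg : ((u, v) : ℝ × ℝ) ∈ segment ℝ ((u, 0) : ℝ × ℝ) ((u, w) : ℝ × ℝ) := by
        refine ⟨1 - v / w, v / w, ?_, div_nonneg hv hw0.le, by ring, ?_⟩
        · have : v / w ≤ 1 := div_le_one_of_le₀ hvw hw0.le
          linarith
        · show ((1 - v / w) * u, (1 - v / w) * 0) + (v / w * u, v / w * w) = (u, v)
          rw [Prod.mk_add_mk, Prod.mk.injEq]
          constructor
          · ring
          · rw [mul_zero, zero_add, div_mul_cancel₀ _ hw0.ne']
      have huS : ((u, 0) : ℝ × ℝ) ∈ S := hxmem u hu (hSbound (u, v) ⟨hu, hv, hs⟩).1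
      calc f (u, v) ≤ max (f (u, 0)) (f (u, w)) := hfx.le_on_segment huS hqS hpseg
        _ ≤ max (f (u, 0)) M := max_le_max le_rfl (hhyp _ hqseg)
  -- Key pointwise bound 2 : f p ≤ max (f (0, p.2)) M
  have key2 : ∀ p ∈ S, f p ≤ max (f (0, p.2)) M := by
    rintro ⟨u, v⟩ hp
    obtain ⟨hu, hv, hs⟩ := hp
    simp only at hu hv hs ⊢
    rcases eq_or_lt_of_le hu with hu0 | hu0
    · rw [← hu0]; exact le_max_left _ _
    · set w : ℝ := a * (1 - v / b) with hwdef
      have hvw : u ≤ w := by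
        have h2 : u / a ≤ 1 - v / b := by linarith
        calc u = a * (u / a) := by field_simp
          _ ≤ a * (1 - v / b) := by nlinarith
      have hw0 : 0 < w := lt_of_lt_of_le hu0 hvw
      have hqseg : ((w, v) : ℝ × ℝ) ∈ segment ℝ ((a, 0) : ℝ × ℝ) ((0, b) : ℝ × ℝ) := by
        refine ⟨1 - v / b, v / b, ?_, div_nonneg hv hb.le, by ring, ?_⟩
        · have : u / a ≤ 1 - v / b := by linarith
          have := div_nonneg hu ha.le
          linarith
        · show ((1 - v / b) * a, (1 - v / b) * 0) + (v / b * 0, v / b * b) = (w, v)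
          rw [Prod.mk_add_mk, Prod.mk.injEq]
          constructor
          · rw [hwdef]; ring
          · field_simp; ring
      have hqS : ((w, v) : ℝ × ℝ) ∈ S := by
        refine ⟨hw0.le, hv, ?_⟩
        simp only
        have hwa : w / a = 1 - v / b := by rw [hwdef]; field_simp
        rw [hwa]; linarith
      have hpseg : ((u, v) : ℝ × ℝ) ∈ segment ℝ ((0, v) : ℝ × ℝ) ((w, v) : ℝ × ℝ) := by
        refine ⟨1 - u / w, u / w, ?_, div_nonneg hu hw0.le, by ring, ?_⟩
        · have : u / w ≤ 1 := div_le_one_of_le₀ hvw hw0.le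
          linarith
        · show ((1 - u / w) * 0, (1 - u / w) * v) + (u / w * w, u / w * v) = (u, v)
          rw [Prod.mk_add_mk, Prod.mk.injEq]
          constructor
          · rw [mul_zero, zero_add, div_mul_cancel₀ _ hw0.ne']
          · ring
      have huS : ((0, v) : ℝ × ℝ) ∈ S := hymem v hv (hSbound (u, v) ⟨hu, hv, hs⟩).2
      calc f (u, v) ≤ max (f (0, v)) (f (w, v)) := hfx.le_on_segment huS hqS hpseg
        _ ≤ max (f (0, v)) M := max_le_max le_rfl (hhyp _ hqseg)
  have hM0 : 0 ≤ M := le_max_of_le_left (hf0 _ hamem)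
  -- pointwise square bound
  have keySq : ∀ p ∈ S, f p ^ 2 ≤ 2 * (f (p.1, 0) * f (0, p.2)) + 2 * M ^ 2 := by
    intro p hp
    have h1 := key1 p hp
    have h2 := key2 p hp
    have hfp0 := hf0 p hp
    have hg0 : 0 ≤ f (p.1, 0) := hf0 _ (hxmem p.1 hp.1 (hSbound p hp).1)
    have hh0 : 0 ≤ f (0, p.2) := hf0 _ (hymem p.2 hp.2.1 (hSbound p hp).2)
    rcases le_total (f (p.1, 0)) M with c1 | c1
    · have hfM : f p ≤ M := h1.trans (max_le c1 le_rfl)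
      nlinarith
    · rcases le_total (f (0, p.2)) M with c2 | c2
      · have hfM : f p ≤ M := h2.trans (max_le c2 le_rfl)
        nlinarith
      · have e1 : f p ≤ f (p.1, 0) := h1.trans (max_le le_rfl c1)
        have e2 : f p ≤ f (0, p.2) := h2.trans (max_le le_rfl c2)
        nlinarith
  -- Compactness / measurability
  have hSclosed : IsClosed S := by
    rw [hSdef]
    have : {p : ℝ × ℝ | 0 ≤ p.1 ∧ 0 ≤ p.2 ∧ p.1 / a + p.2 / b ≤ 1} =
        {p : ℝ × ℝ | 0 ≤ p.1} ∩ ({p : ℝ × ℝ | 0 ≤ p.2} ∩ {p : ℝ × ℝ | p.1 / a + p.2 / b ≤ 1}) := by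
      ext p; simp [mem_setOf_eq, mem_inter_iff, and_assoc]
    rw [this]
    exact (isClosed_le continuous_const continuous_fst).inter
      ((isClosed_le continuous_const continuous_snd).inter
        (isClosed_le (by fun_prop) continuous_const))
  have hSsub : S ⊆ Icc (0:ℝ) a ×ˢ Icc (0:ℝ) b := by
    intro p hp
    exact ⟨⟨hp.1, (hSbound p hp).1⟩, ⟨hp.2.1, (hSbound p hp).2⟩⟩
  have hRcomp : IsCompact (Icc (0:ℝ) a ×ˢ Icc (0:ℝ) b) := isCompact_Icc.prod isCompact_Icc
  have hScomp : IsCompact S := hRcomp.of_isClosed_subset hSclosed hSsub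
  have hSmeas : MeasurableSet S := hSclosed.measurableSet
  have hRmeas : MeasurableSet (Icc (0:ℝ) a ×ˢ Icc (0:ℝ) b) :=
    measurableSet_Icc.prod measurableSet_Icc
  -- continuity of boundary functions
  have hgc : ContinuousOn (fun p : ℝ × ℝ => f (p.1, 0)) (Icc (0:ℝ) a ×ˢ Icc (0:ℝ) b) := by
    refine hfc.comp (by fun_prop) ?_
    intro p hp
    exact hxmem p.1 hp.1.1 hp.1.2
  have hhc : ContinuousOn (fun p : ℝ × ℝ => f (0, p.2)) (Icc (0:ℝ) a ×ˢ Icc (0:ℝ) b) := by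
    refine hfc.comp (by fun_prop) ?_
    intro p hp
    exact hymem p.2 hp.2.1 hp.2.2
  -- integrabilities
  have hInt1 : IntegrableOn (fun p => f p ^ 2) S := (hfc.pow 2).integrableOn_compact hScomp
  have hBoundCont : ContinuousOn (fun p : ℝ × ℝ => 2 * (f (p.1, 0) * f (0, p.2)) + 2 * M ^ 2)
      (Icc (0:ℝ) a ×ˢ Icc (0:ℝ) b) :=
    (continuousOn_const.mul (hgc.mul hhc)).add continuousOn_const
  have hIntB : IntegrableOn (fun p : ℝ × ℝ => 2 * (f (p.1, 0) * f (0, p.2)) + 2 * M ^ 2)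
      (Icc (0:ℝ) a ×ˢ Icc (0:ℝ) b) := hBoundCont.integrableOn_compact hRcomp
  -- nonnegativity of bound on rectangle
  have hBnn : ∀ p ∈ Icc (0:ℝ) a ×ˢ Icc (0:ℝ) b,
      (0:ℝ) ≤ 2 * (f (p.1, 0) * f (0, p.2)) + 2 * M ^ 2 := by
    intro p hp
    have hg0 : 0 ≤ f (p.1, 0) := hf0 _ (hxmem p.1 hp.1.1 hp.1.2)
    have hh0 : 0 ≤ f (0, p.2) := hf0 _ (hymem p.2 hp.2.1 hp.2.2)
    positivity
  -- set up abbreviations for the boundary integrals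
  set A : ℝ := ∫ x in Icc (0:ℝ) a, f (x, 0) with hAdef
  set B : ℝ := ∫ y in Icc (0:ℝ) b, f (0, y) with hBdef
  have hA0 : 0 ≤ A := setIntegral_nonneg measurableSet_Icc
    (fun x hx => hf0 _ (hxmem x hx.1 hx.2))
  have hB0 : 0 ≤ B := setIntegral_nonneg measurableSet_Icc
    (fun y hy => hf0 _ (hymem y hy.1 hy.2))
  -- integral chain
  have step1 : (∫ p in S, f p ^ 2) ≤
      ∫ p in S, (2 * (f (p.1, 0) * f (0, p.2)) + 2 * M ^ 2) :=
    setIntegral_mono_on hInt1 (hIntB.mono_set hSsub) hSmeas keySq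
  have step2 : (∫ p in S, (2 * (f (p.1, 0) * f (0, p.2)) + 2 * M ^ 2)) ≤
      ∫ p in Icc (0:ℝ) a ×ˢ Icc (0:ℝ) b, (2 * (f (p.1, 0) * f (0, p.2)) + 2 * M ^ 2) := by
    refine setIntegral_mono_set hIntB ?_ (HasSubset.Subset.eventuallyLE hSsub)
    exact (ae_restrict_iff' hRmeas).mpr (Filter.Eventually.of_forall hBnn)
  have hIntgh : IntegrableOn (fun p : ℝ × ℝ => f (p.1, 0) * f (0, p.2))
      (Icc (0:ℝ) a ×ˢ Icc (0:ℝ) b) := (hgc.mul hhc).integrableOn_compact hRcomp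
  have step3 : (∫ p in Icc (0:ℝ) a ×ˢ Icc (0:ℝ) b,
      (2 * (f (p.1, 0) * f (0, p.2)) + 2 * M ^ 2)) = 2 * (A * B) + 2 * M ^ 2 * (a * b) := by
    rw [integral_add (hIntgh.const_mul 2) ((integrableOn_const_iff (C := 2 * M ^ 2) enorm_ne_top).mpr (Or.inr ?_))]
    · rw [integral_const_mul, setIntegral_const, measureReal_def]
      have hprod : (∫ p in Icc (0:ℝ) a ×ˢ Icc (0:ℝ) b, f (p.1, 0) * f (0, p.2)) = A * B := by
        rw [hAdef, hBdef, Measure.volume_eq_prod ℝ ℝ, ← setIntegral_prod_mul]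
      have hvol : (volume (Icc (0:ℝ) a ×ˢ Icc (0:ℝ) b)).toReal = a * b := by
        rw [Measure.volume_eq_prod ℝ ℝ, Measure.prod_prod, Real.volume_Icc, Real.volume_Icc,
          ← ENNReal.ofReal_mul (by linarith)]
        rw [ENNReal.toReal_ofReal (by nlinarith)]
        ring
      rw [hprod, hvol]
      ring_nf
    · rw [Measure.volume_eq_prod ℝ ℝ, Measure.prod_prod, Real.volume_Icc, Real.volume_Icc]
      exact ENNReal.mul_lt_top ENNReal.ofReal_lt_top ENNReal.ofReal_lt_top
  have hItotal : (∫ p in S, f p ^ 2) ≤ 2 * (A * B) + 2 * M ^ 2 * (a * b) := by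
    rw [← step3]; exact step1.trans step2
  -- final numeric estimate
  set s : ℝ := Real.sqrt (a * b) with hsdef
  have hs0 : 0 ≤ s := Real.sqrt_nonneg _
  have hs2 : s ^ 2 = a * b := Real.sq_sqrt (by positivity)
  have hfinal : 2 * (A * B) + 2 * M ^ 2 * (a * b) ≤ (2 * (A + B + s * M)) ^ 2 := by
    nlinarith [mul_nonneg hA0 hB0, mul_nonneg hs0 hM0, mul_nonneg (mul_nonneg hA0 hs0) hM0,
      mul_nonneg (mul_nonneg hB0 hs0) hM0, sq_nonneg (A - B), sq_nonneg M, sq_nonneg s]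
  calc Real.sqrt (∫ p in S, f p ^ 2)
      ≤ Real.sqrt ((2 * (A + B + s * M)) ^ 2) :=
        Real.sqrt_le_sqrt (hItotal.trans hfinal)
    _ = 2 * (A + B + s * M) := Real.sqrt_sq (by positivity)
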